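/- Assume c₂(1+z)^{-1/ν} ≤ G(z) ≤ c₃(1+z)^{-1/ν} for all z > 0, with ν ∈ (0,1) and γ ∈ (-1, 0) such that γ + ν > 0. For K ≥ 1 and x > 0 define Ψ_K(x) = π ∫_K^∞ (1 - cos G(z/x^γ)) dz. Then there is a constant C (depending only on c₃, ν, γ) such that Ψ_K(x) ≤ C min(x^γ, x^{2γ/ν} K^{1-2/ν}) for all x > 0, K ≥ 1. -/

import Mathlib

open Real Set MeasureTheory

lemma shiftInt (f : ℝ → ℝ) (a c : ℝ) :
    ∫ x in Ioi a, f (x + c) = ∫ x in Ioi (a + c), f x := by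
  have he : MeasurableEmbedding (fun x : ℝ => x + c) :=
    (MeasurableEquiv.addRight c).measurableEmbedding
  have hm : Measure.map (fun x : ℝ => x + c) volume = volume :=
    map_add_right_eq_self volume c
  symm
  calc ∫ x in Ioi (a + c), f x
      = ∫ x in Ioi (a+c), f x ∂(Measure.map (fun x : ℝ => x + c) volume) := by rw [hm]
    _ = ∫ x in (fun x : ℝ => x + c) ⁻¹' Ioi (a+c), f (x + c) := he.setIntegral_map f _
    _ = ∫ x in Ioi a, f (x + c) := by
        congr 1
        ext x; simp [mem_Ioi]

lemma onesubcos (θ : ℝ) : 1 - Real.cos θ ≤ θ ^ 2 := by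
  have h1 : Real.sin (θ/2) ^ 2 = 1/2 - Real.cos (2 * (θ/2)) / 2 := Real.sin_sq_eq_half_sub (θ/2)
  have h2 : Real.sin (θ/2) ^ 2 ≤ (θ/2) ^ 2 := Real.sin_sq_le_sq
  rw [show 2 * (θ/2) = θ by ring] at h1
  nlinarith

theorem stmt7 (ν γ c₂ c₃ : ℝ) (hν : ν ∈ Set.Ioo (0 : ℝ) 1) (hγ : γ ∈ Set.Ioo (-1 : ℝ) 0)
    (hγν : 0 < γ + ν) (hc₂ : 0 < c₂) (hc : c₂ < c₃) (G : ℝ → ℝ)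
    (hG : ∀ z > 0, c₂ * (1 + z) ^ (-1 / ν) ≤ G z ∧ G z ≤ c₃ * (1 + z) ^ (-1 / ν)) :
    ∃ C > 0, ∀ x > 0, ∀ K ≥ (1 : ℝ),
      π * ∫ z in Set.Ioi K, (1 - Real.cos (G (z / x ^ γ)))
        ≤ C * min (x ^ γ) (x ^ (2 * γ / ν) * K ^ (1 - 2 / ν)) := by
  obtain ⟨hν0, hν1⟩ := hν
  obtain ⟨hγn, hγ0⟩ := hγ
  have hc₃ : 0 < c₃ := hc₂.trans hc
  set p : ℝ := -2/ν with hp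
  have hp1 : p < -1 := by
    rw [hp, div_lt_iff₀ hν0]; nlinarith
  have hp10 : p + 1 < 0 := by linarith
  have hq : (0:ℝ) < -1/(p+1) := div_pos_iff.mpr (Or.inr ⟨by norm_num, hp10⟩)
  have hC : 0 < π * c₃^2 * (-1/(p+1)) := by
    have := Real.pi_pos; positivity
  refine ⟨π * c₃^2 * (-1/(p+1)), hC, ?_⟩
  intro x hx K hK
  have hK0 : (0:ℝ) < K := lt_of_lt_of_le one_pos hK
  set s := x ^ γ with hs
  have hs0 : 0 < s := Real.rpow_pos_of_pos hx γ
  have hKs : (0:ℝ) < K + s := by linarith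
  -- value of the shifted power integral
  have hgint_val : ∫ z in Ioi K, (s+z)^p = -(K+s)^(p+1)/(p+1) := by
    have h1 : ∫ z in Ioi K, (s+z)^p = ∫ z in Ioi K, (z+s)^p := by
      simp_rw [add_comm s]
    rw [h1, shiftInt (fun u => u^p) K s, integral_Ioi_rpow_of_lt hp1 hKs]
  -- integrability
  have hmeas : AEStronglyMeasurable (fun z : ℝ => (s+z)^p)
      (volume.restrict (Ioi K)) := by
    apply ContinuousOn.aestronglyMeasurable _ measurableSet_Ioi
    apply ContinuousOn.rpow_const ((continuous_const.add continuous_id).continuousOn)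
    intro z hz
    exact Or.inl (show (0:ℝ) < s + z by have : 0 < z := hK0.trans hz; positivity).ne'
  have hint : IntegrableOn (fun z : ℝ => (s+z)^p) (Ioi K) := by
    apply Integrable.mono' (integrableOn_Ioi_rpow_of_lt hp1 hK0) hmeas
    filter_upwards [ae_restrict_mem measurableSet_Ioi] with z hz
    have hz0 : 0 < z := hK0.trans hz
    rw [norm_eq_abs, abs_of_nonneg (Real.rpow_nonneg (by linarith) p)]
    exact Real.rpow_le_rpow_of_nonpos hz0 (by linarith) (by linarith)
  have hintg : IntegrableOn (fun z : ℝ => c₃^2 * s^(2/ν) * (s+z)^p) (Ioi K) :=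
    hint.const_mul _
  -- pointwise bound and integral monotonicity
  have hmono : (∫ z in Ioi K, (1 - Real.cos (G (z / s))))
      ≤ ∫ z in Ioi K, c₃^2 * s^(2/ν) * (s+z)^p := by
    apply integral_mono_of_nonneg
    · filter_upwards [ae_restrict_mem measurableSet_Ioi] with z _
      have := Real.cos_le_one (G (z / s))
      simp only [Pi.zero_apply]; linarith
    · exact hintg
    · filter_upwards [ae_restrict_mem measurableSet_Ioi] with z hz
      have hz0 : 0 < z := hK0.trans hz
      have hw : 0 < z / s := div_pos hz0 hs0
      obtain ⟨hG1, hG2⟩ := hG (z/s) hw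
      have h1w : (0:ℝ) < 1 + z/s := by linarith
      have hGn : 0 ≤ G (z/s) :=
        le_trans (by positivity) hG1
      have hθ : 1 - Real.cos (G (z/s)) ≤ (G (z/s))^2 := onesubcos _
      have hsq : (G (z/s))^2 ≤ (c₃ * (1+z/s)^(-1/ν))^2 := by
        apply pow_le_pow_left₀ hGn hG2
      have key : (c₃ * (1+z/s)^(-1/ν))^2 = c₃^2 * (1+z/s)^p := by
        rw [mul_pow, ← Real.rpow_natCast ((1+z/s)^(-1/ν)) 2, ← Real.rpow_mul h1w.le]
        congr 1
        push_cast
        rw [hp]; ring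
      have key2 : (1 + z/s)^p = s^(2/ν) * (s+z)^p := by
        rw [show 1 + z/s = (s+z)/s by field_simp]
        rw [Real.div_rpow (by linarith) hs0.le, div_eq_mul_inv,
          ← Real.rpow_neg hs0.le, show -p = 2/ν by rw [hp]; ring]
        ring
      calc 1 - Real.cos (G (z/s)) ≤ (G (z/s))^2 := hθ
        _ ≤ (c₃ * (1+z/s)^(-1/ν))^2 := hsq
        _ = c₃^2 * (1+z/s)^p := key
        _ = c₃^2 * s^(2/ν) * (s+z)^p := by rw [key2]; ring
  have hval : (∫ z in Ioi K, c₃^2 * s^(2/ν) * (s+z)^p)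
      = c₃^2 * s^(2/ν) * (-(K+s)^(p+1)/(p+1)) := by
    rw [MeasureTheory.integral_const_mul, hgint_val]
  -- the two bounds
  have hKp : (K+s)^(p+1) ≤ K^(p+1) :=
    Real.rpow_le_rpow_of_nonpos hK0 (by linarith) hp10.le
  have hsp : (K+s)^(p+1) ≤ s^(p+1) :=
    Real.rpow_le_rpow_of_nonpos hs0 (by linarith) hp10.le
  have hb1 : s^(2/ν) * (K+s)^(p+1) ≤ s := by
    calc s^(2/ν) * (K+s)^(p+1) ≤ s^(2/ν) * s^(p+1) :=
          mul_le_mul_of_nonneg_left hsp (Real.rpow_nonneg hs0.le _)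
      _ = s := by
          rw [← Real.rpow_add hs0, show 2/ν + (p+1) = 1 by rw [hp]; ring,
            Real.rpow_one]
  have hb2 : s^(2/ν) * (K+s)^(p+1) ≤ s^(2/ν) * K^(p+1) :=
    mul_le_mul_of_nonneg_left hKp (Real.rpow_nonneg hs0.le _)
  -- rewriting the min terms
  have hxe : x ^ (2*γ/ν) = s^(2/ν) := by
    rw [hs, ← Real.rpow_mul hx.le, show γ*(2/ν) = 2*γ/ν by ring]
  have hKe : K ^ (1 - 2/ν) = K^(p+1) := by
    rw [show p + 1 = 1 - 2/ν by rw [hp]; ring]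
  have main : π * ∫ z in Ioi K, (1 - Real.cos (G (z / s)))
      ≤ π * c₃^2 * (-1/(p+1)) * (s^(2/ν) * (K+s)^(p+1)) := by
    calc π * ∫ z in Ioi K, (1 - Real.cos (G (z / s)))
        ≤ π * ∫ z in Ioi K, c₃^2 * s^(2/ν) * (s+z)^p :=
          mul_le_mul_of_nonneg_left hmono Real.pi_pos.le
      _ = π * c₃^2 * (-1/(p+1)) * (s^(2/ν) * (K+s)^(p+1)) := by
          rw [hval]; ring
  rw [mul_min_of_nonneg _ _ hC.le]
  refine le_min ?_ ?_
  · calc π * ∫ z in Ioi K, (1 - Real.cos (G (z / x ^ γ)))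
        ≤ π * c₃^2 * (-1/(p+1)) * (s^(2/ν) * (K+s)^(p+1)) := main
      _ ≤ π * c₃^2 * (-1/(p+1)) * s := mul_le_mul_of_nonneg_left hb1 hC.le
  · calc π * ∫ z in Ioi K, (1 - Real.cos (G (z / x ^ γ)))
        ≤ π * c₃^2 * (-1/(p+1)) * (s^(2/ν) * (K+s)^(p+1)) := main
      _ ≤ π * c₃^2 * (-1/(p+1)) * (s^(2/ν) * K^(p+1)) :=
          mul_le_mul_of_nonneg_left hb2 hC.le
      _ = π * c₃^2 * (-1/(p+1)) * (x ^ (2*γ/ν) * K ^ (1-2/ν)) := by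
          rw [hxe, hKe]
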